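/- If n is an odd perfect number whose smallest prime factor p₁ satisfies p₁ ≥ 11, then T(n) < log 2 − 11/(50 p₁²). -/

import Mathlib

open Real Finset

lemma sum_pow_mod2 {p : ℕ} (hp : p % 2 = 1) (m : ℕ) :
    (∑ i ∈ range m, p ^ i) % 2 = m % 2 := by
  induction m with
  | zero => simp
  | succ k ih =>
    rw [Finset.sum_range_succ]
    have : p ^ k % 2 = 1 := Nat.odd_iff.mp ((Nat.odd_iff.mpr hp).pow)
    omega

lemma geom_factor (p m : ℕ) :
    ∑ i ∈ range (2 * m), p ^ i = (1 + p) * ∑ i ∈ range m, (p ^ 2) ^ i := by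
  induction m with
  | zero => simp
  | succ k ih =>
    have h2 : 2 * (k + 1) = (2 * k) + 1 + 1 := by ring
    rw [h2, Finset.sum_range_succ, Finset.sum_range_succ, ih, Finset.sum_range_succ]
    ring_nf


lemma exp_quad {t : ℝ} (h0 : 0 ≤ t) (h1 : t ≤ 1/10) :
    Real.exp t ≤ 1 + t + (11/20)*t^2 := by
  have hb := Real.exp_bound (x := t) (by rw [abs_of_nonneg h0]; linarith) (n := 3) (by norm_num)
  have hs : ∑ m ∈ range 3, t ^ m / m.factorial = 1 + t + t^2/2 := by
    norm_num [Finset.sum_range_succ]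
  rw [hs, abs_of_nonneg h0] at hb
  norm_num [Nat.factorial] at hb
  have h2 := (abs_sub_le_iff.1 hb).1
  nlinarith [pow_nonneg h0 3, pow_nonneg h0 2]

lemma log_lb1 {x : ℝ} (h0 : 0 < x) (h1 : x ≤ 1/11) :
    x - (14/25)*x^2 ≤ Real.log (1+x) := by
  rw [Real.le_log_iff_exp_le (by linarith)]
  have ht0 : 0 ≤ x - (14/25)*x^2 := by nlinarith
  have ht1 : x - (14/25)*x^2 ≤ 1/10 := by nlinarith
  have := exp_quad ht0 ht1
  nlinarith [sq_nonneg x, sq_nonneg (x - (14/25)*x^2)]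

lemma log_lb2 {x : ℝ} (h0 : 0 < x) (h1 : x ≤ 1/11) :
    x + (2/5)*x^2 ≤ Real.log (1+x+x^2) := by
  rw [Real.le_log_iff_exp_le (by nlinarith)]
  have ht0 : 0 ≤ x + (2/5)*x^2 := by nlinarith
  have ht1 : x + (2/5)*x^2 ≤ 1/10 := by nlinarith
  have := exp_quad ht0 ht1
  nlinarith [sq_nonneg x, pow_nonneg h0.le 3, pow_nonneg h0.le 4]

lemma ge3 (p b : ℕ) : p ^ b * (1 + p + p ^ 2) ≤ ∑ i ∈ range (b + 2 + 1), p ^ i := by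
  rw [Finset.sum_range_succ, Finset.sum_range_succ]
  have h1 : p ^ b ≤ ∑ i ∈ range (b + 1), p ^ i :=
    Finset.single_le_sum (fun i _ => Nat.zero_le _) (Finset.self_mem_range_succ b)
  have e1 : p ^ (b + 1) = p ^ b * p := pow_succ p b
  have e2 : p ^ (b + 2) = p ^ b * p ^ 2 := by ring
  nlinarith

lemma ge2 (p b : ℕ) : p ^ b * (1 + p) ≤ ∑ i ∈ range (b + 1 + 1), p ^ i := by
  rw [Finset.sum_range_succ]
  have h1 : p ^ b ≤ ∑ i ∈ range (b + 1), p ^ i :=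
    Finset.single_le_sum (fun i _ => Nat.zero_le _) (Finset.self_mem_range_succ b)
  have e1 : p ^ (b + 1) = p ^ b * p := pow_succ p b
  nlinarith

/-- `T n` is the sum of the reciprocals of the distinct primes dividing `n`. -/
noncomputable def T (n : ℕ) : ℝ := ∑ p ∈ n.primeFactors, (1 : ℝ) / p

set_option maxHeartbeats 1000000 in
theorem stmt_10 (n : ℕ) (hodd : Odd n) (hperf : Nat.Perfect n) (hp1 : 11 ≤ n.minFac) :
    T n < Real.log 2 - 11 / (50 * (n.minFac : ℝ) ^ 2) := by
  have hn1 : 1 < n := by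
    rcases Nat.lt_or_ge n 2 with h | h
    · interval_cases n <;> simp [Nat.minFac_zero, Nat.minFac_one] at hp1
    · exact h
  have hn0 : n ≠ 0 := by omega
  set S := n.primeFactors with hS
  set a : ℕ → ℕ := fun p => n.factorization p with ha
  set E : ℕ → ℕ := fun p => ∑ i ∈ range (a p + 1), p ^ i with hE
  have hprod : ∏ p ∈ S, E p = 2 * n := by
    rw [← Nat.sum_divisors hn0]
    exact (Nat.perfect_iff_sum_divisors_eq_two_mul (by omega)).mp hperf
  -- basic facts about primes in S
  have hmem : ∀ p ∈ S, p.Prime ∧ p ∣ n ∧ 11 ≤ p ∧ 1 ≤ a p ∧ p % 2 = 1 := by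
    intro p hp
    have hpp := Nat.prime_of_mem_primeFactors hp
    have hdvd := Nat.dvd_of_mem_primeFactors hp
    refine ⟨hpp, hdvd, le_trans hp1 (Nat.minFac_le_of_dvd hpp.two_le hdvd), ?_, ?_⟩
    · exact (Nat.Prime.factorization_pos_of_dvd hpp hn0 hdvd)
    · rcases hpp.eq_two_or_odd with rfl | h
      · have := Nat.odd_iff.mp hodd; omega
      · exact h
  have hE0 : ∀ p ∈ S, E p ≠ 0 := by
    intro p hp
    have hpp := (hmem p hp).1
    exact Nat.pos_iff_ne_zero.mp (Finset.sum_pos (fun i _ => pow_pos hpp.pos i) nonempty_range_add_one)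
  have hfact2 : ∑ p ∈ S, (E p).factorization 2 = 1 := by
    have h := Nat.factorization_prod hE0
    have h2 : (∏ p ∈ S, E p).factorization 2 = 1 := by
      rw [hprod, Nat.factorization_mul two_ne_zero hn0]
      have hn2 : n.factorization 2 = 0 :=
        Nat.factorization_eq_zero_of_not_dvd (by have := Nat.odd_iff.mp hodd; omega)
      simp [Nat.Prime.factorization_self Nat.prime_two, hn2]
    rw [h] at h2
    simpa [Finset.sum_apply'] using h2
  obtain ⟨q, hqS, hq1, hothers⟩ :
      ∃ q ∈ S, (E q).factorization 2 = 1 ∧ ∀ p ∈ S, p ≠ q → (E p).factorization 2 = 0 := by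
    have hex : ∃ q ∈ S, (E q).factorization 2 ≠ 0 := by
      by_contra h
      push_neg at h
      rw [Finset.sum_eq_zero h] at hfact2
      omega
    obtain ⟨q, hqS, hq⟩ := hex
    have hsplit : (E q).factorization 2 + ∑ p ∈ S.erase q, (E p).factorization 2 = 1 := by
      rw [← hfact2]
      exact Finset.add_sum_erase S (fun p => (E p).factorization 2) hqS
    have hrest : ∑ p ∈ S.erase q, (E p).factorization 2 = 0 := by omega
    refine ⟨q, hqS, by omega, fun p hp hne => ?_⟩
    exact (Finset.sum_eq_zero_iff.mp hrest) p (Finset.mem_erase.mpr ⟨hne, hp⟩)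
  have heven : ∀ p ∈ S, p ≠ q → ∃ b, a p = 2 * b ∧ 1 ≤ b := by
    intro p hp hne
    have h0 := hothers p hp hne
    have hEodd : ¬ 2 ∣ E p := by
      intro hdvd
      have := Nat.Prime.factorization_pos_of_dvd Nat.prime_two (hE0 p hp) hdvd
      omega
    have hmod : E p % 2 = (a p + 1) % 2 := sum_pow_mod2 (hmem p hp).2.2.2.2 (a p + 1)
    have hap := (hmem p hp).2.2.2.1
    exact ⟨a p / 2, by omega, by omega⟩
  obtain ⟨m, hm, hm1⟩ : ∃ m, a q + 1 = 2 * m ∧ 1 ≤ m := by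
    have h2dvd : 2 ∣ E q := Nat.dvd_of_factorization_pos (by rw [hq1]; omega)
    have hmod : E q % 2 = (a q + 1) % 2 := sum_pow_mod2 (hmem q hqS).2.2.2.2 (a q + 1)
    exact ⟨(a q + 1) / 2, by omega, by omega⟩
  have hdvd2n : q + 1 ∣ 2 * n := by
    have h1 : E q = (1 + q) * ∑ i ∈ range m, (q ^ 2) ^ i := by
      rw [hE]
      simp only []
      rw [hm, geom_factor]
    have h2 : q + 1 ∣ E q := by rw [h1, add_comm]; exact Dvd.intro _ rfl
    exact h2.trans (hprod ▸ Finset.dvd_prod_of_mem E hqS)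
  have hq2p : 2 * n.minFac ≤ q + 1 := by
    obtain ⟨c, hc⟩ : ∃ c, q + 1 = 2 * c := ⟨(q + 1) / 2, by have := (hmem q hqS).2.2.2.2; omega⟩
    have hcn : c ∣ n := (mul_dvd_mul_iff_left (two_ne_zero)).mp (by rwa [← hc])
    have hc1 : 1 < c := by have := (hmem q hqS).2.2.1; omega
    have h3 : n.minFac ≤ c :=
      le_trans (Nat.minFac_le_of_dvd (Nat.minFac_prime (by omega)).two_le
        ((Nat.minFac_dvd c).trans hcn)) (Nat.minFac_le (by omega))
    omega
  -- real-analytic part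
  have hp1S : n.minFac ∈ S := Nat.mem_primeFactors.mpr ⟨Nat.minFac_prime (by omega), Nat.minFac_dvd n, hn0⟩
  have hqgt : n.minFac < q := by
    have h11 := (hmem q hqS).2.2.1
    omega
  set F : ℕ → ℝ := fun p => (E p : ℝ) / (p : ℝ) ^ (a p) with hF
  have hNat : ∏ p ∈ S, p ^ a p = n := by
    conv_rhs => rw [← Nat.factorization_prod_pow_eq_self hn0]
    rw [Finsupp.prod, Nat.support_factorization]
  have hFpos : ∀ p ∈ S, 0 < F p := by
    intro p hp
    have hpp := (hmem p hp).1
    have hppos : (0:ℝ) < p := by exact_mod_cast hpp.pos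
    exact div_pos (by exact_mod_cast Nat.pos_of_ne_zero (hE0 p hp)) (pow_pos hppos _)
  have hprodR : ∏ p ∈ S, F p = 2 := by
    have hNatR : ∏ x ∈ S, ((x:ℝ)) ^ a x = (n:ℝ) := by
      rw [← hNat]
      push_cast
      ring
    rw [hF, Finset.prod_div_distrib, hNatR, ← Nat.cast_prod, hprod]
    push_cast
    rw [mul_div_assoc, div_self (by exact_mod_cast hn0 : (n:ℝ) ≠ 0), mul_one]
  set g : ℕ → ℝ := fun p => if p = q then 1 + 1/(p:ℝ) else 1 + 1/(p:ℝ) + (1/(p:ℝ))^2 with hg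
  have hx : ∀ p ∈ S, 0 < 1/(p:ℝ) ∧ 1/(p:ℝ) ≤ 1/11 := by
    intro p hp
    have h11 := (hmem p hp).2.2.1
    have : (11:ℝ) ≤ p := by exact_mod_cast h11
    constructor
    · positivity
    · exact one_div_le_one_div_of_le (by norm_num) this
  have hgpos : ∀ p ∈ S, 0 < g p := by
    intro p hp
    obtain ⟨h1, h2⟩ := hx p hp
    rw [hg]
    dsimp only
    split <;> positivity
  have hgF : ∀ p ∈ S, g p ≤ F p := by
    intro p hp
    have hpp := (hmem p hp).1
    have hppos : (0:ℝ) < p := by exact_mod_cast hpp.pos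
    rw [hg, hF]
    by_cases hpq : p = q
    · simp only [hpq, if_pos rfl]
      subst hpq
      obtain ⟨b, hb⟩ : ∃ b, a p = b + 1 := ⟨a p - 1, by have := (hmem p hp).2.2.2.1; omega⟩
      have hge := ge2 p b
      rw [← hb] at hge
      have hge' : (p:ℝ) ^ b * (1 + p) ≤ E p := by exact_mod_cast hge
      rw [le_div_iff₀ (pow_pos hppos _)]
      have hp0 : (p:ℝ) ≠ 0 := ne_of_gt hppos
      have key : (1 + 1/(p:ℝ)) * (p:ℝ) = 1 + p := by field_simp; ring
      calc (1 + 1/(p:ℝ)) * (p:ℝ) ^ a p = ((1 + 1/(p:ℝ)) * (p:ℝ)) * (p:ℝ) ^ b := by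
            rw [hb, pow_succ]; ring
        _ = (p:ℝ) ^ b * (1 + p) := by rw [key]; ring
        _ ≤ ((E p : ℕ) : ℝ) := hge'
    · simp only [if_neg hpq]
      obtain ⟨b, hb, hb1⟩ := heven p hp hpq
      have hge := ge3 p (2 * b - 2)
      have hbe : 2 * b - 2 + 2 = a p := by omega
      rw [show 2 * b - 2 + 2 + 1 = a p + 1 by omega] at hge
      have hge' : (p:ℝ) ^ (2*b-2) * (1 + p + p^2) ≤ E p := by exact_mod_cast hge
      rw [le_div_iff₀ (pow_pos hppos _)]
      have hp0 : (p:ℝ) ≠ 0 := ne_of_gt hppos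
      have key : (1 + 1/(p:ℝ) + (1/(p:ℝ))^2) * (p:ℝ)^2 = 1 + p + (p:ℝ)^2 := by
        field_simp
        ring
      calc (1 + 1/(p:ℝ) + (1/(p:ℝ))^2) * (p:ℝ) ^ a p
            = ((1 + 1/(p:ℝ) + (1/(p:ℝ))^2) * (p:ℝ)^2) * (p:ℝ) ^ (2*b-2) := by
            rw [← hbe, pow_add]; ring
        _ = (p:ℝ) ^ (2*b-2) * (1 + p + (p:ℝ)^2) := by rw [key]; ring
        _ ≤ ((E p : ℕ) : ℝ) := hge'
  have hlog : ∑ p ∈ S, Real.log (g p) ≤ Real.log 2 := by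
    have h2 : Real.log 2 = ∑ p ∈ S, Real.log (F p) := by
      rw [← hprodR, Real.log_prod (fun p hp => (hFpos p hp).ne')]
    rw [h2]
    exact Finset.sum_le_sum fun p hp => Real.log_le_log (hgpos p hp) (hgF p hp)
  set c : ℕ → ℝ := fun p => if p = q then (14/25)*(1/(p:ℝ))^2 else -((2/5)*(1/(p:ℝ))^2) with hc
  have hTle : T n ≤ ∑ p ∈ S, Real.log (g p) + ∑ p ∈ S, c p := by
    unfold T
    rw [← Finset.sum_add_distrib]
    apply Finset.sum_le_sum
    intro p hp
    obtain ⟨h1, h2⟩ := hx p hp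
    rw [hg, hc]
    by_cases hpq : p = q
    · simp only [if_pos hpq]
      have := log_lb1 h1 h2
      linarith
    · simp only [if_neg hpq]
      have := log_lb2 h1 h2
      linarith
  have hcsum : ∑ p ∈ S, c p ≤ (14/25)*(1/(q:ℝ))^2 - (2/5)*(1/(n.minFac:ℝ))^2 := by
    rw [← Finset.add_sum_erase S c hqS]
    have h1 : c q = (14/25)*(1/(q:ℝ))^2 := by rw [hc]; simp
    have h2 : ∑ p ∈ S.erase q, c p ≤ -((2/5)*(1/(n.minFac:ℝ))^2) := by
      have hmemE : n.minFac ∈ S.erase q := Finset.mem_erase.mpr ⟨by omega, hp1S⟩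
      have : ∀ p ∈ S.erase q, c p = -((2/5)*(1/(p:ℝ))^2) := by
        intro p hp
        rw [hc]
        simp [(Finset.mem_erase.mp hp).1]
      rw [Finset.sum_congr rfl this, Finset.sum_neg_distrib]
      have hs := Finset.single_le_sum (f := fun p : ℕ => (2:ℝ)/5*(1/(p:ℝ))^2)
        (fun i _ => by positivity) hmemE
      linarith
    linarith [h1]
  -- final numeric step
  have hP : (11:ℝ) ≤ (n.minFac:ℝ) := by exact_mod_cast hp1
  have hQ : 2*(n.minFac:ℝ) ≤ (q:ℝ) + 1 := by exact_mod_cast hq2p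
  have hkey : (14/25)*(1/(q:ℝ))^2 < (2/5)*(1/(n.minFac:ℝ))^2 - 11/(50*(n.minFac:ℝ)^2) := by
    have e1 : (14/25)*(1/(q:ℝ))^2 = 14/25/(q:ℝ)^2 := by ring
    have e2 : (2/5)*(1/(n.minFac:ℝ))^2 - 11/(50*(n.minFac:ℝ)^2) = 9/50/(n.minFac:ℝ)^2 := by
      field_simp
      ring
    rw [e1, e2, div_lt_div_iff₀ (by nlinarith) (by nlinarith)]
    nlinarith
  linarith [hTle, hlog, hcsum]
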